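/- Assume (i) for every ε > 0 there exists M > 0 such that f i t ≤ (λ + ε)·t for all i ∈ ι and all t ≥ M (i.e. limsup_{t→+∞} f(i,t)/t ≤ λ uniformly in i), and (ii) for every K > 0 there exists δ > 0 such that f i t · t − 2·F i t > K for all i ∈ ι and all t ≥ δ (i.e. lim_{t→+∞}[f(i,t)·t − 2F(i,t)] = +∞ uniformly in i). Then for every K > 0 there exists δ > 0 such that λ·t² − 2·F i t ≥ K for all i ∈ ι and all t ≥ δ; that is, lim_{t→+∞}[λt² − 2F(i,t)] = +∞ uniformly in i. -/

import Mathlib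

set_option maxHeartbeats 1000000 in
/-- Lemma 3 (auxone), uniform version: if `limsup_{t→+∞} f(i,t)/t ≤ λ` uniformly in `i`
and `f(i,t)·t − 2F(i,t) → +∞` uniformly in `i`, then `λt² − 2F(i,t) → +∞` uniformly in `i`. -/
theorem stmt_0 {ι : Type*} [Nonempty ι] (lam : ℝ) (f : ι → ℝ → ℝ)
    (hf_cont : ∀ i, Continuous (f i))
    (A : ℝ) (hA : 0 < A)
    (hgrowth : ∀ i t, |f i t| ≤ A * (1 + |t|))
    (F : ι → ℝ → ℝ)
    (hF : ∀ i ξ, F i ξ = ∫ t in (0:ℝ)..ξ, f i t)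
    (h1 : ∀ ε > 0, ∃ M > 0, ∀ i, ∀ t ≥ M, f i t ≤ (lam + ε) * t)
    (h2 : ∀ K > 0, ∃ δ > 0, ∀ i, ∀ t ≥ δ, f i t * t - 2 * F i t > K) :
    ∀ K > 0, ∃ δ > 0, ∀ i, ∀ t ≥ δ, lam * t ^ 2 - 2 * F i t ≥ K := by
  -- F has derivative f
  have hFd : ∀ i x, HasDerivAt (F i) (f i x) x := by
    intro i x
    have h : HasDerivAt (fun ξ => ∫ t in (0:ℝ)..ξ, f i t) (f i x) x :=
      intervalIntegral.integral_hasDerivAt_right ((hf_cont i).intervalIntegrable _ _)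
        ((hf_cont i).stronglyMeasurableAtFilter _ _) (hf_cont i).continuousAt
    have : F i = fun ξ => ∫ t in (0:ℝ)..ξ, f i t := funext fun ξ => hF i ξ
    rw [this]
    exact h
  intro K hK
  obtain ⟨δ₀, hδ₀, hδ⟩ := h2 K hK
  refine ⟨max δ₀ 1, lt_of_lt_of_le one_pos (le_max_right _ _), ?_⟩
  intro i t ht
  have ht1 : (1:ℝ) ≤ t := le_trans (le_max_right _ _) ht
  have ht0 : (0:ℝ) < t := lt_of_lt_of_le one_pos ht1
  set H : ℝ → ℝ := fun s => (F i s + K / 2) / s ^ 2 with hHdef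
  -- derivative of H
  have hder : ∀ s : ℝ, 0 < s →
      HasDerivAt H ((f i s * s ^ 2 - (F i s + K / 2) * (2 * s)) / (s ^ 2) ^ 2) s := by
    intro s hs
    have h : HasDerivAt (fun y => (F i y + K / 2) / y ^ 2) _ s :=
      ((hFd i s).add_const (K / 2)).div (hasDerivAt_pow 2 s) (by positivity)
    convert h using 1
    push_cast
    ring
  -- H is monotone on [max δ₀ 1, ∞)
  have hmono : StrictMonoOn H (Set.Ici (max δ₀ 1)) := by
    apply strictMonoOn_of_deriv_pos (convex_Ici _)
    · intro s hs
      have hs0 : (0:ℝ) < s := lt_of_lt_of_le one_pos (le_trans (le_max_right _ _) hs)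
      exact ((hder s hs0).differentiableAt.continuousAt).continuousWithinAt
    · intro s hs
      rw [interior_Ici] at hs
      have hs0 : (0:ℝ) < s := lt_of_lt_of_le one_pos (le_trans (le_max_right _ _) hs.le)
      have hsδ : δ₀ ≤ s := le_trans (le_max_left _ _) hs.le
      rw [(hder s hs0).deriv]
      have hK' := hδ i s hsδ
      apply div_pos
      · nlinarith
      · positivity
  -- key: H t ≤ lam / 2
  have hkey : H t ≤ lam / 2 := by
    apply le_of_forall_pos_le_add
    intro ε hε
    obtain ⟨M, hM, hMf⟩ := h1 ε hε
    set C₂ : ℝ := A * (1 + M) * M + |lam + ε| * M ^ 2 / 2 + K / 2 with hC₂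
    set s : ℝ := max (max t M) (max 1 (2 * (|C₂| + 1) / ε)) with hsdef
    have hts : t ≤ s := le_trans (le_max_left _ _) (le_max_left _ _)
    have hMs : M ≤ s := le_trans (le_max_right _ _) (le_max_left _ _)
    have hs1 : (1:ℝ) ≤ s := le_trans (le_max_left _ _) (le_max_right _ _)
    have hsR : 2 * (|C₂| + 1) / ε ≤ s := le_trans (le_max_right _ _) (le_max_right _ _)
    clear_value s
    clear_value C₂
    have hs0 : (0:ℝ) < s := lt_of_lt_of_le one_pos hs1
    -- bound F i s
    have hint1 : IntervalIntegrable (f i) MeasureTheory.volume 0 M :=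
      (hf_cont i).intervalIntegrable _ _
    have hint2 : IntervalIntegrable (f i) MeasureTheory.volume M s :=
      (hf_cont i).intervalIntegrable _ _
    have hsplit : F i s = (∫ x in (0:ℝ)..M, f i x) + ∫ x in M..s, f i x := by
      rw [hF, intervalIntegral.integral_add_adjacent_intervals hint1 hint2]
    have hb1 : |∫ x in (0:ℝ)..M, f i x| ≤ A * (1 + M) * M := by
      have h := intervalIntegral.norm_integral_le_of_norm_le_const
        (C := A * (1 + M)) (f := f i) (a := 0) (b := M) ?_
      · have : |M - 0| = M := by rw [sub_zero, abs_of_pos hM]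
        rw [this] at h
        exact h
      · intro x hx
        rw [Set.uIoc_of_le hM.le] at hx
        have hx0 : 0 < x := hx.1
        have hxM : x ≤ M := hx.2
        have := hgrowth i x
        rw [Real.norm_eq_abs]
        have : |f i x| ≤ A * (1 + |x|) := hgrowth i x
        have hax : |x| = x := abs_of_pos hx0
        nlinarith
    have hb2 : (∫ x in M..s, f i x) ≤ (lam + ε) * (s ^ 2 / 2 - M ^ 2 / 2) := by
      have hmono2 : (∫ x in M..s, f i x) ≤ ∫ x in M..s, (lam + ε) * x := by
        apply intervalIntegral.integral_mono_on hMs hint2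
          ((continuous_const.mul continuous_id).intervalIntegrable _ _)
        intro x hx
        exact hMf i x hx.1
      have hcomp : (∫ x in M..s, (lam + ε) * x) = (lam + ε) * (s ^ 2 / 2 - M ^ 2 / 2) := by
        rw [intervalIntegral.integral_const_mul, integral_id]
        ring
      rw [hcomp] at hmono2
      exact hmono2
    have hFs : F i s + K / 2 ≤ (lam + ε) / 2 * s ^ 2 + C₂ := by
      have h1' := (abs_le.mp hb1).2
      have habs1 : -(lam + ε) * M ^ 2 / 2 ≤ |lam + ε| * M ^ 2 / 2 := by
        have := neg_abs_le (lam + ε)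
        nlinarith [sq_nonneg M]
      rw [hsplit]
      nlinarith
    -- bound H s
    have hHs : H s ≤ (lam + ε) / 2 + C₂ / s ^ 2 := by
      have hs2 : (0:ℝ) < s ^ 2 := by positivity
      rw [hHdef]
      beta_reduce
      rw [div_le_iff₀ hs2] at *
      calc F i s + K / 2 ≤ (lam + ε) / 2 * s ^ 2 + C₂ := hFs
        _ = ((lam + ε) / 2 + C₂ / s ^ 2) * s ^ 2 := by field_simp
    have htail : C₂ / s ^ 2 ≤ ε / 2 := by
      have hs2 : (0:ℝ) < s ^ 2 := by positivity
      rw [div_le_iff₀ hs2]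
      have h1 : 2 * (|C₂| + 1) ≤ s * ε := by
        rw [div_le_iff₀ hε] at hsR
        linarith
      have hss : s ≤ s ^ 2 := by nlinarith
      have h2' : ε * s ≤ ε * s ^ 2 := mul_le_mul_of_nonneg_left hss hε.le
      nlinarith [le_abs_self C₂]
    have hts' : H t ≤ H s := by
      rcases eq_or_lt_of_le hts with h | h
      · rw [h]
      · exact (hmono ht (le_trans ht hts) h).le
    linarith
  -- conclude
  rw [hHdef] at hkey
  have ht2 : (0:ℝ) < t ^ 2 := by positivity
  beta_reduce at hkey
  rw [div_le_iff₀ ht2] at hkey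
  nlinarith
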